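/- Let n ≥ 2 be an integer and γ > 1. There exists a constant c > 0, depending only on n and γ, such that for every ε > 0 the following holds: if h : [0,1] → ℝ is continuous on [0,1], twice continuously differentiable on (0,1), satisfies Lh = 0 on (0,1), h(0) = 0, h(1) = 1, and r < h(r) for all r ∈ (0,1), then h(r) > max{ r^α − (c√ε)^α, 0 } for all r ∈ (0,1). -/

import Mathlib

open Set Filter

noncomputable section

/-- The ODE operator `L`:
`(L h)(r) = h'' + ((n-2)/r + 2r/(ε+r²)) h' - ((n-2)/r² + 2/(γ(ε+r²))) h`. -/
def Lop (n : ℕ) (γ ε : ℝ) (h : ℝ → ℝ) (r : ℝ) : ℝ :=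
  deriv (deriv h) r + (((n:ℝ) - 2)/r + 2*r/(ε + r^2)) * deriv h r
    - (((n:ℝ) - 2)/r^2 + 2/(γ*(ε + r^2))) * h r

/-- `α := (-(n-1) + √((n-1)² + 4(n-2 + 2/γ)))/2`. -/
def alphaN (n : ℕ) (γ : ℝ) : ℝ :=
  (-((n:ℝ) - 1) + Real.sqrt (((n:ℝ)-1)^2 + 4*((n:ℝ) - 2 + 2/γ)))/2

/-- `h` is a normalized solution of `Lh = 0` on `(0,1)`: continuous on `[0,1]`,
twice continuously differentiable on `(0,1)`, with `h(0) = 0` and `h(1) = 1`. -/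
def IsODESol (n : ℕ) (γ ε : ℝ) (h : ℝ → ℝ) : Prop :=
  ContinuousOn h (Icc (0:ℝ) 1) ∧ (∀ r ∈ Ioo (0:ℝ) 1, ContDiffAt ℝ 2 h r) ∧
    (∀ r ∈ Ioo (0:ℝ) 1, Lop n γ ε h r = 0) ∧ h 0 = 0 ∧ h 1 = 1

/-- At a local minimum of a twice-differentiable function the second derivative
is nonnegative. -/
lemma second_deriv_nonneg_of_isLocalMin {f : ℝ → ℝ} {x : ℝ}
    (hd : ∀ᶠ y in nhds x, DifferentiableAt ℝ f y)
    (hd2 : DifferentiableAt ℝ (deriv f) x)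
    (hmin : IsLocalMin f x) : 0 ≤ deriv (deriv f) x := by
  by_contra hneg
  push_neg at hneg
  set L := deriv (deriv f) x with hL
  have hgx : deriv f x = 0 := hmin.deriv_eq_zero
  have hslope : Tendsto (slope (deriv f) x) (nhdsWithin x {x}ᶜ) (nhds L) :=
    hasDerivAt_iff_tendsto_slope.mp hd2.hasDerivAt
  have hev : ∀ᶠ y in nhdsWithin x {x}ᶜ, slope (deriv f) x y < L/2 :=
    hslope.eventually_lt_const (by linarith)
  have hev' : ∀ᶠ y in nhds x, y ∈ ({x}ᶜ : Set ℝ) → slope (deriv f) x y < L/2 :=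
    eventually_nhdsWithin_iff.mp hev
  have hall : ∀ᶠ y in nhds x, (y ∈ ({x}ᶜ : Set ℝ) → slope (deriv f) x y < L/2)
      ∧ DifferentiableAt ℝ f y ∧ f x ≤ f y := hev'.and (hd.and hmin)
  obtain ⟨δ, hδ, H⟩ := Metric.eventually_nhds_iff.mp hall
  set b := x + δ/2 with hb
  have hxb : x < b := by simp [hb]; linarith
  have hmem : ∀ y ∈ Icc x b, dist y x < δ := by
    intro y hy
    obtain ⟨hy1, hy2⟩ := hy
    rw [hb] at hy2
    rw [Real.dist_eq, abs_lt]
    constructor <;> linarith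
  have hanti : StrictAntiOn f (Icc x b) := by
    apply strictAntiOn_of_deriv_neg (convex_Icc x b)
    · intro y hy
      exact ((H (hmem y hy)).2.1).continuousAt.continuousWithinAt
    · intro y hy
      rw [interior_Icc] at hy
      have hyx : y ≠ x := ne_of_gt hy.1
      have hs := (H (hmem y (Ioo_subset_Icc_self hy))).1 hyx
      rw [slope_def_field, hgx] at hs
      have h3 : (deriv f y) / (y - x) < L/2 := by
        field_simp at hs ⊢
        convert hs using 2
        ring
      have hyx' : 0 < y - x := by linarith [hy.1]
      have := (div_lt_iff₀ hyx').mp h3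
      nlinarith
  have h1 : f b < f x := hanti (left_mem_Icc.mpr hxb.le) (right_mem_Icc.mpr hxb.le) hxb
  have h2 : f x ≤ f b := (H (hmem b (right_mem_Icc.mpr hxb.le))).2.2
  linarith

/-- The key algebraic positivity: the barrier `w(r) = r^α - m` is a strict
subsolution.  Here `X` stands for `r^(α-2)`, `X*r` for `r^(α-1)`, `X*r^2` for
`r^α`, and `m > γ²εX` comes from `r > γ√ε`. -/
lemma key_pos (n : ℕ) (hn : 2 ≤ n) (γ α ε r X m : ℝ) (hγ : 1 < γ)
    (hα0 : 0 < α) (hα1 : α < 1)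
    (hid2 : γ * (α^2 + ((n:ℝ)-1)*α) = γ * ((n:ℝ)-2) + 2)
    (hε : 0 < ε) (hr : 0 < r) (hX : 0 < X) (hXm : γ^2 * ε * X < m) :
    0 < α*(α-1)*X + (((n:ℝ)-2)/r + 2*r/(ε+r^2)) * (α*(X*r))
      - (((n:ℝ)-2)/r^2 + 2/(γ*(ε+r^2))) * (X*r^2 - m) := by
  have hn2 : (2:ℝ) ≤ (n:ℝ) := by exact_mod_cast hn
  have ht : 0 < ε + r^2 := by positivity
  have hγ0 : 0 < γ := by linarith
  have hm : 0 < m := lt_trans (by positivity) hXm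
  have hkey : (γ*α - 1) * (ε*X) < m := by nlinarith [mul_pos hε hX]
  have hrhs : 0 < γ*(ε+r^2)*((n:ℝ)-2)*m + 2*r^2*(m - (γ*α-1)*(ε*X)) := by
    have h1 : 0 ≤ γ*(ε+r^2)*((n:ℝ)-2)*m := by
      apply mul_nonneg; apply mul_nonneg; positivity; linarith; linarith
    have h2 : 0 < 2*r^2*(m - (γ*α-1)*(ε*X)) :=
      mul_pos (by positivity) (by linarith)
    linarith
  have hexpand : γ*(ε+r^2)*r^2 * (α*(α-1)*X + (((n:ℝ)-2)/r + 2*r/(ε+r^2)) * (α*(X*r))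
      - (((n:ℝ)-2)/r^2 + 2/(γ*(ε+r^2))) * (X*r^2 - m))
      = γ*(ε+r^2)*((n:ℝ)-2)*m + 2*r^2*(m - (γ*α-1)*(ε*X)) := by
    field_simp
    linear_combination (r^2*X*(ε+r^2)) * hid2
  nlinarith [mul_pos (mul_pos hγ0 ht) (by positivity : (0:ℝ) < r^2)]

/-- Basic facts about the exponent `α`. -/
lemma alpha_facts (n : ℕ) (hn : 2 ≤ n) (γ : ℝ) (hγ : 1 < γ) :
    0 < alphaN n γ ∧ alphaN n γ < 1 ∧
      γ * ((alphaN n γ)^2 + ((n:ℝ)-1)*(alphaN n γ)) = γ * ((n:ℝ)-2) + 2 := by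
  have hn2 : (2:ℝ) ≤ (n:ℝ) := by exact_mod_cast hn
  have hγ0 : 0 < γ := by linarith
  set D := ((n:ℝ)-1)^2 + 4*((n:ℝ) - 2 + 2/γ) with hD_def
  have h2γ : 0 < 2/γ := by positivity
  have h2γ' : 2/γ < 2 := by
    rw [div_lt_iff₀ hγ0]; linarith
  have hDgt : ((n:ℝ)-1)^2 < D := by rw [hD_def]; nlinarith
  have hD0 : 0 ≤ D := le_trans (sq_nonneg _) hDgt.le
  have hs : Real.sqrt D ^ 2 = D := Real.sq_sqrt hD0
  have hlt : (n:ℝ)-1 < Real.sqrt D := (Real.lt_sqrt (by linarith)).mpr hDgt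
  have hlt2 : Real.sqrt D < (n:ℝ)+1 := by
    rw [Real.sqrt_lt' (by linarith)]
    rw [hD_def]; nlinarith
  have hαeq : alphaN n γ = (-((n:ℝ)-1) + Real.sqrt D)/2 := rfl
  refine ⟨by rw [hαeq]; linarith, by rw [hαeq]; linarith, ?_⟩
  rw [hαeq]
  have hs4 : γ * Real.sqrt D ^ 2 = γ*(((n:ℝ)-1)^2 + 4*((n:ℝ)-2)) + 8 := by
    rw [hs, hD_def]; field_simp; ring
  linear_combination (1/4 : ℝ) * hs4

/-- Maximum principle comparison with the barrier `w(r) = r^α - (γ√ε)^α` on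
`[γ√ε, 1]`. -/
lemma maxprin (n : ℕ) (hn : 2 ≤ n) (γ ε : ℝ) (hγ : 1 < γ) (hε : 0 < ε)
    (h : ℝ → ℝ) (hsol : IsODESol n γ ε h) (hlow : ∀ r ∈ Ioo (0:ℝ) 1, r < h r)
    (ha1 : γ * Real.sqrt ε < 1) :
    ∀ r ∈ Ioo (γ * Real.sqrt ε) 1,
      r ^ alphaN n γ - (γ * Real.sqrt ε) ^ alphaN n γ < h r := by
  obtain ⟨hα0, hα1, hid2⟩ := alpha_facts n hn γ hγ
  set α := alphaN n γ with hα_def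
  obtain ⟨hcont, hC2, hode, h0, h1⟩ := hsol
  set a := γ * Real.sqrt ε with ha_def
  have ha : 0 < a := mul_pos (lt_trans one_pos hγ) (Real.sqrt_pos.mpr hε)
  have ha2 : a^2 = γ^2 * ε := by rw [ha_def, mul_pow, Real.sq_sqrt hε.le]
  set m := a ^ α with hm_def
  have hm : 0 < m := Real.rpow_pos_of_pos ha α
  set w := fun x : ℝ => x ^ α - m with hw_def
  set u := fun x : ℝ => h x - w x with hu_def
  have hsub : Icc a 1 ⊆ Icc (0:ℝ) 1 := Icc_subset_Icc ha.le le_rfl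
  have hucont : ContinuousOn u (Icc a 1) := by
    apply ContinuousOn.sub (hcont.mono hsub)
    intro x hx
    exact ((Real.continuousAt_rpow_const x α
      (Or.inl (lt_of_lt_of_le ha hx.1).ne')).sub continuousAt_const).continuousWithinAt
  obtain ⟨r0, hr0mem, hr0min⟩ :=
    isCompact_Icc.exists_isMinOn (nonempty_Icc.mpr ha1.le) hucont
  have hmin' : ∀ y ∈ Icc a 1, u r0 ≤ u y := fun y hy => hr0min hy
  have hua : 0 < u a := by
    have hha : a < h a := hlow a ⟨ha, ha1⟩
    have hwa : w a = 0 := by simp [hw_def, hm_def]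
    have : u a = h a := by rw [hu_def]; simp [hwa]
    rw [this]; linarith
  have hu1 : 0 < u 1 := by
    have hw1 : w 1 = 1 - m := by simp [hw_def, Real.one_rpow]
    have : u 1 = m := by rw [hu_def]; simp [hw1, h1]
    rw [this]; exact hm
  have hmain : 0 < u r0 := by
    by_contra hle
    push_neg at hle
    have hne_a : r0 ≠ a := fun he => by rw [he] at hle; linarith
    have hne_1 : r0 ≠ 1 := fun he => by rw [he] at hle; linarith
    have hr0i : r0 ∈ Ioo a 1 :=
      ⟨lt_of_le_of_ne hr0mem.1 (Ne.symm hne_a), lt_of_le_of_ne hr0mem.2 hne_1⟩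
    have hr0o : r0 ∈ Ioo (0:ℝ) 1 := ⟨lt_trans ha hr0i.1, hr0i.2⟩
    have hr0p : 0 < r0 := hr0o.1
    have hloc : IsLocalMin u r0 := hr0min.isLocalMin (Icc_mem_nhds hr0i.1 hr0i.2)
    have hnhd : Ioo (0:ℝ) 1 ∈ nhds r0 := isOpen_Ioo.mem_nhds hr0o
    have hC2on : ContDiffOn ℝ 2 h (Ioo (0:ℝ) 1) := fun y hy => (hC2 y hy).contDiffWithinAt
    have hdh2 : DifferentiableAt ℝ (deriv h) r0 := by
      have hd1 : ContDiffOn ℝ 1 (deriv h) (Ioo (0:ℝ) 1) :=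
        hC2on.deriv_of_isOpen isOpen_Ioo (by norm_num)
      exact (hd1.differentiableOn one_ne_zero).differentiableAt hnhd
    have hwd : ∀ x : ℝ, 0 < x → HasDerivAt w (α * x^(α-1)) x := fun x hx =>
      (Real.hasDerivAt_rpow_const (Or.inl hx.ne')).sub_const m
    have hw2 : HasDerivAt (fun x : ℝ => α * x^(α-1)) (α * ((α-1) * r0^(α-1-1))) r0 :=
      (Real.hasDerivAt_rpow_const (Or.inl hr0p.ne')).const_mul α
    have hud : ∀ᶠ y in nhds r0, DifferentiableAt ℝ u y := by
      filter_upwards [hnhd] with y hy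
      exact ((hC2 y hy).differentiableAt two_ne_zero).sub (hwd y hy.1).differentiableAt
    have hu'ev : deriv u =ᶠ[nhds r0] fun y => deriv h y - α * y^(α-1) := by
      filter_upwards [hnhd] with y hy
      rw [hu_def]
      rw [deriv_fun_sub ((hC2 y hy).differentiableAt two_ne_zero) (hwd y hy.1).differentiableAt,
        (hwd y hy.1).deriv]
    have hgd : DifferentiableAt ℝ (fun y => deriv h y - α * y^(α-1)) r0 :=
      hdh2.sub hw2.differentiableAt
    have hud2 : DifferentiableAt ℝ (deriv u) r0 := hgd.congr_of_eventuallyEq hu'ev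
    have h2nonneg : 0 ≤ deriv (deriv u) r0 :=
      second_deriv_nonneg_of_isLocalMin hud hud2 hloc
    have hderiv_u0 : deriv u r0 = 0 := hloc.deriv_eq_zero
    have hdh_eq : deriv h r0 = α * r0^(α-1) := by
      have hself : deriv u r0 = deriv h r0 - α * r0^(α-1) := hu'ev.self_of_nhds
      rw [hderiv_u0] at hself
      linarith [hself]
    have hdd_eq : deriv (deriv u) r0 = deriv (deriv h) r0 - α*((α-1)*r0^(α-1-1)) := by
      rw [hu'ev.deriv_eq, deriv_fun_sub hdh2 hw2.differentiableAt, hw2.deriv]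
    have pow_split : ∀ x : ℝ, 0 < x → x ^ α = x ^ (α-2) * x^2 := by
      intro x hx
      have h2 : x ^ ((2:ℕ):ℝ) = x ^ (2:ℕ) := Real.rpow_natCast x 2
      rw [show α = (α-2) + ((2:ℕ):ℝ) by push_cast; ring, Real.rpow_add hx, h2]
      push_cast
      ring_nf
    set X := r0 ^ (α - 2) with hX_def
    have hXpos : 0 < X := Real.rpow_pos_of_pos hr0p _
    have e1 : r0 ^ (α-1) = X * r0 := by
      rw [hX_def, show α-1 = (α-2)+1 by ring, Real.rpow_add hr0p, Real.rpow_one]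
    have e2 : r0 ^ α = X * r0^2 := by
      rw [hX_def]; exact pow_split r0 hr0p
    have e3 : r0 ^ (α-1-1) = X := by
      rw [hX_def, show α-1-1 = α-2 by ring]
    have hXm : γ^2 * ε * X < m := by
      have hlt : r0 ^ (α-2) < a ^ (α-2) :=
        Real.rpow_lt_rpow_of_neg ha hr0i.1 (by linarith)
      have hma : a ^ (α-2) * a^2 = m := by
        rw [hm_def]; exact (pow_split a ha).symm
      calc γ^2 * ε * X = a^2 * X := by rw [ha2]
        _ < a^2 * a^(α-2) := by
            apply mul_lt_mul_of_pos_left _ (by positivity)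
            rw [hX_def]; exact hlt
        _ = m := by rw [← hma]; ring
    have hhw : h r0 ≤ X * r0^2 - m := by
      have hur0 : u r0 = h r0 - (r0^α - m) := by rw [hu_def]
      rw [e2] at hur0
      linarith
    have hode0 := hode r0 hr0o
    rw [Lop] at hode0
    have hsecond : α*(α-1)*X ≤ deriv (deriv h) r0 := by
      rw [hdd_eq, e3] at h2nonneg
      linarith
    have hkey := key_pos n hn γ α ε r0 X m hγ hα0 hα1 hid2 hε hr0p hXpos hXm
    have hQpos : 0 < ((n:ℝ)-2)/r0^2 + 2/(γ*(ε+r0^2)) := by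
      have hn2 : (2:ℝ) ≤ (n:ℝ) := by exact_mod_cast hn
      have hq1 : 0 ≤ ((n:ℝ)-2)/r0^2 := div_nonneg (by linarith) (sq_nonneg _)
      have hq2 : 0 < 2/(γ*(ε+r0^2)) := by positivity
      linarith
    rw [hdh_eq, e1] at hode0
    nlinarith [mul_le_mul_of_nonneg_left hhw hQpos.le]
  intro r hr
  have hur : 0 < u r := lt_of_lt_of_le hmain (hmin' r (Ioo_subset_Icc_self hr))
  have : u r = h r - (r ^ α - m) := by rw [hu_def]
  linarith [this ▸ hur]

/-- Lemma 7.2: `ε`-independent lower bound `h(r) > max(r^α - (c√ε)^α, 0)`. -/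
theorem ode_lower_bound (n : ℕ) (hn : 2 ≤ n) (γ : ℝ) (hγ : 1 < γ) :
    ∃ c : ℝ, 0 < c ∧
      ∀ ε : ℝ, 0 < ε →
      ∀ h : ℝ → ℝ, IsODESol n γ ε h →
      (∀ r ∈ Ioo (0:ℝ) 1, r < h r) →
      ∀ r ∈ Ioo (0:ℝ) 1,
        max (r ^ alphaN n γ - (c * Real.sqrt ε) ^ alphaN n γ) 0 < h r := by
  obtain ⟨hα0, hα1, _⟩ := alpha_facts n hn γ hγ
  refine ⟨γ, by linarith, ?_⟩
  intro ε hε h hsol hlow r hr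
  have hrh := hlow r hr
  by_cases hra : r ≤ γ * Real.sqrt ε
  · have h1 : r ^ alphaN n γ ≤ (γ * Real.sqrt ε) ^ alphaN n γ :=
      Real.rpow_le_rpow hr.1.le hra hα0.le
    exact max_lt (by linarith [hr.1]) (by linarith [hr.1])
  · push_neg at hra
    have ha1 : γ * Real.sqrt ε < 1 := lt_trans hra hr.2
    have hkey := maxprin n hn γ ε hγ hε h hsol hlow ha1 r ⟨hra, hr.2⟩
    exact max_lt hkey (by linarith [hr.1])
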